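/- Regularized local binarization: with A, b as above and β > −σ_min², define L_β(θ) = ‖A cos θ − b‖₂² + ‖A sin θ‖₂² + β‖sin θ‖₂² and η_β(θ) = (σ_min² + β)/(2σ_max(σ_max + 2‖A cos θ − b‖₂/‖sin θ‖₂)). If sin θ ≠ 0 and ‖sin θ‖∞ ≤ η_β(θ), then L_β(θ̃) ≤ L_β(θ) − (1/2)(σ_min² + β)‖sin θ‖₂², where θ̃_i = π·round(θ_i/π). -/

import Mathlib

set_option maxHeartbeats 1000000


open Real Finset

/-- Euclidean (ℓ2) norm of a finite real vector. -/
noncomputable def enorm2 {m : ℕ} (v : Fin m → ℝ) : ℝ := Real.sqrt (∑ j, (v j) ^ 2)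

lemma enorm_nonneg' {m : ℕ} (v : Fin m → ℝ) : 0 ≤ enorm2 v := Real.sqrt_nonneg _

lemma sq_enorm {m : ℕ} (v : Fin m → ℝ) : enorm2 v ^ 2 = ∑ j, (v j) ^ 2 :=
  Real.sq_sqrt (Finset.sum_nonneg fun _ _ => sq_nonneg _)

lemma enorm_le_of_forall {m : ℕ} (u w : Fin m → ℝ) (c : ℝ) (hc : 0 ≤ c)
    (h : ∀ i, |u i| ≤ c * |w i|) : enorm2 u ≤ c * enorm2 w := by
  have hsq : enorm2 u ^ 2 ≤ (c * enorm2 w) ^ 2 := by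
    rw [sq_enorm, mul_pow, sq_enorm, Finset.mul_sum]
    refine Finset.sum_le_sum fun i _ => ?_
    have hi := h i
    nlinarith [abs_nonneg (u i), abs_nonneg (w i), sq_abs (u i), sq_abs (w i)]
  have h1 : 0 ≤ enorm2 u := enorm_nonneg' u
  have h2 : 0 ≤ c * enorm2 w := mul_nonneg hc (enorm_nonneg' w)
  nlinarith

lemma enorm_cs {m : ℕ} (u v : Fin m → ℝ) : ∑ i, u i * v i ≤ enorm2 u * enorm2 v := by
  have h := Finset.sum_mul_sq_le_sq_mul_sq Finset.univ u v
  have h2 : (∑ i, u i * v i) ≤ |∑ i, u i * v i| := le_abs_self _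
  have h3 : |∑ i, u i * v i| = Real.sqrt ((∑ i, u i * v i) ^ 2) := (Real.sqrt_sq_eq_abs _).symm
  rw [h3] at h2
  refine h2.trans ?_
  have := Real.sqrt_le_sqrt h
  rw [Real.sqrt_mul (Finset.sum_nonneg fun _ _ => sq_nonneg _)] at this
  exact this

lemma enorm2_add_le {m : ℕ} (u v : Fin m → ℝ) : enorm2 (u + v) ≤ enorm2 u + enorm2 v := by
  have hcs := enorm_cs u v
  have hsq : enorm2 (u + v) ^ 2 ≤ (enorm2 u + enorm2 v) ^ 2 := by
    rw [sq_enorm]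
    have : ∑ j, (u j + v j) ^ 2 = (∑ j, u j ^ 2) + 2 * (∑ j, u j * v j) + ∑ j, v j ^ 2 := by
      have hterm : ∀ j, (u j + v j) ^ 2 = u j ^ 2 + 2 * (u j * v j) + v j ^ 2 := fun j => by ring
      rw [Finset.sum_congr rfl fun j _ => hterm j, Finset.sum_add_distrib,
        Finset.sum_add_distrib, ← Finset.mul_sum]
    show ∑ j, (u j + v j) ^ 2 ≤ _
    rw [this]
    have h1 := sq_enorm u
    have h2 := sq_enorm v
    nlinarith
  have h1 : 0 ≤ enorm2 (u + v) := enorm_nonneg' _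
  have h2 : 0 ≤ enorm2 u + enorm2 v := add_nonneg (enorm_nonneg' _) (enorm_nonneg' _)
  nlinarith

lemma cos_round_bound (x : ℝ) :
    |Real.cos (Real.pi * (round (x / Real.pi) : ℤ)) - Real.cos x| ≤ Real.sin x ^ 2 := by
  set k : ℤ := round (x / Real.pi) with hk
  set d : ℝ := x - Real.pi * k with hdd
  have hπ : (0 : ℝ) < Real.pi := Real.pi_pos
  have hx : x = Real.pi * k + d := by ring
  have hd : |d| ≤ Real.pi / 2 := by
    have h1 : |x / Real.pi - k| ≤ 1 / 2 := abs_sub_round _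
    have h2 : d = Real.pi * (x / Real.pi - k) := by
      field_simp [hdd]
      exact hdd
    rw [h2, abs_mul, abs_of_pos hπ]
    nlinarith
  have hsk : Real.sin (Real.pi * k) = 0 := by rw [mul_comm]; exact Real.sin_int_mul_pi k
  have hck : Real.cos (Real.pi * k) ^ 2 = 1 := by
    have := Real.sin_sq_add_cos_sq (Real.pi * k)
    rw [hsk] at this; nlinarith
  have hcos : Real.cos x = Real.cos (Real.pi * k) * Real.cos d := by
    rw [hx, Real.cos_add, hsk]; ring
  have hsin : Real.sin x ^ 2 = Real.sin d ^ 2 := by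
    rw [hx, Real.sin_add, hsk]
    have : Real.cos (Real.pi * ↑k) ^ 2 * Real.sin d ^ 2 = Real.sin d ^ 2 := by
      rw [hck]; ring
    nlinarith [this]
  have hcd : 0 ≤ Real.cos d :=
    Real.cos_nonneg_of_mem_Icc ⟨neg_le_of_abs_le hd, le_of_abs_le hd⟩
  have hcd1 : Real.cos d ≤ 1 := Real.cos_le_one d
  have habs : |Real.cos (Real.pi * k) - Real.cos x| = 1 - Real.cos d := by
    rw [hcos]
    have : Real.cos (Real.pi * k) - Real.cos (Real.pi * k) * Real.cos d
        = Real.cos (Real.pi * k) * (1 - Real.cos d) := by ring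
    rw [this, abs_mul]
    have : |Real.cos (Real.pi * k)| = 1 := by
      rw [← Real.sqrt_sq_eq_abs, hck, Real.sqrt_one]
    rw [this, one_mul, abs_of_nonneg (by linarith)]
  rw [habs, hsin]
  have hpyth := Real.sin_sq_add_cos_sq d
  nlinarith

theorem regularized_local_binarization {M N : ℕ}
    (A : Matrix (Fin M) (Fin N) ℝ) (b : Fin M → ℝ)
    (σmin σmax β : ℝ) (hσ : 0 < σmin) (hβ : -σmin ^ 2 < β)
    (hmin : ∀ v : Fin N → ℝ, σmin * enorm2 v ≤ enorm2 (A.mulVec v))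
    (hmax : ∀ v : Fin N → ℝ, enorm2 (A.mulVec v) ≤ σmax * enorm2 v)
    (θ : Fin N → ℝ)
    (hsin : (fun i => Real.sin (θ i)) ≠ 0)
    (hsup : (⨆ i, |Real.sin (θ i)|)
      ≤ (σmin ^ 2 + β) / (2 * σmax * (σmax +
          2 * enorm2 (A.mulVec (fun i => Real.cos (θ i)) - b)
            / enorm2 (fun i => Real.sin (θ i))))) :
    (enorm2 (A.mulVec (fun i => Real.cos (Real.pi * (round (θ i / Real.pi) : ℤ))) - b)) ^ 2
      + (enorm2 (A.mulVec (fun i => Real.sin (Real.pi * (round (θ i / Real.pi) : ℤ))))) ^ 2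
      + β * (enorm2 (fun i => Real.sin (Real.pi * (round (θ i / Real.pi) : ℤ)))) ^ 2
    ≤ (enorm2 (A.mulVec (fun i => Real.cos (θ i)) - b)) ^ 2
      + (enorm2 (A.mulVec (fun i => Real.sin (θ i)))) ^ 2
      + β * (enorm2 (fun i => Real.sin (θ i))) ^ 2
      - (1 / 2) * (σmin ^ 2 + β) * (enorm2 (fun i => Real.sin (θ i))) ^ 2 := by
  -- notation
  set sθ : Fin N → ℝ := fun i => Real.sin (θ i) with hsθ
  set cθ : Fin N → ℝ := fun i => Real.cos (θ i) with hcθ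
  set c2 : Fin N → ℝ := fun i => Real.cos (Real.pi * (round (θ i / Real.pi) : ℤ)) with hc2
  set s := enorm2 sθ with hs
  set r := enorm2 (A.mulVec cθ - b) with hr
  set K := σmin ^ 2 + β with hK
  have hKpos : 0 < K := by simp [hK]; linarith
  -- sin of the rounded point is 0
  have hzero : (fun i => Real.sin (Real.pi * (round (θ i / Real.pi) : ℤ))) = (0 : Fin N → ℝ) := by
    funext i
    rw [mul_comm]
    exact Real.sin_int_mul_pi _
  have henorm0 : ∀ {m : ℕ}, enorm2 (0 : Fin m → ℝ) = 0 := by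
    intro m; simp [enorm2]
  rw [hzero, Matrix.mulVec_zero, henorm0, henorm0]
  -- existence of a nonzero sine coordinate
  obtain ⟨i0, hi0⟩ : ∃ i, Real.sin (θ i) ≠ 0 := Function.ne_iff.mp hsin
  have hspos : 0 < s := by
    rw [hs, hsθ, enorm2]
    apply Real.sqrt_pos.mpr
    refine Finset.sum_pos' (fun i _ => sq_nonneg _) ⟨i0, Finset.mem_univ i0, ?_⟩
    exact pow_pos (abs_pos.mpr hi0) 2 |>.trans_le (by rw [sq_abs])
  have hrnn : 0 ≤ r := enorm_nonneg' _
  -- σmin ≤ σmax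
  have hσσ : σmin ≤ σmax := by
    have h1 := hmin sθ
    have h2 := hmax sθ
    have := h1.trans h2
    exact le_of_mul_le_mul_right (by linarith [this]) hspos
  have hσmaxpos : 0 < σmax := lt_of_lt_of_le hσ hσσ
  -- the bound η
  set η := K / (2 * σmax * (σmax + 2 * r / s)) with hη
  have hden : 0 < σmax + 2 * r / s := by positivity
  have hηnn : 0 ≤ η := by positivity
  -- each |sin θ i| ≤ η
  have hbdd : BddAbove (Set.range fun i => |Real.sin (θ i)|) :=
    (Set.finite_range _).bddAbove
  have hsup' : ∀ i, |Real.sin (θ i)| ≤ η := fun i =>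
    (le_ciSup hbdd i).trans hsup
  -- the perturbation δ
  set δ : Fin N → ℝ := fun i => c2 i - cθ i with hδ
  have hδbound : ∀ i, |δ i| ≤ Real.sin (θ i) ^ 2 := fun i => cos_round_bound (θ i)
  have hδη : enorm2 δ ≤ η * s := by
    refine enorm_le_of_forall δ sθ η hηnn fun i => ?_
    refine (hδbound i).trans ?_
    have h1 : Real.sin (θ i) ^ 2 = |Real.sin (θ i)| * |Real.sin (θ i)| := by
      rw [← sq_abs]; ring
    rw [h1]
    exact mul_le_mul_of_nonneg_right (hsup' i) (abs_nonneg _)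
  have hδ1 : enorm2 δ ≤ 1 * s := by
    refine enorm_le_of_forall δ sθ 1 zero_le_one fun i => ?_
    refine (hδbound i).trans ?_
    have h1 : Real.sin (θ i) ^ 2 = |Real.sin (θ i)| * |Real.sin (θ i)| := by
      rw [← sq_abs]; ring
    rw [h1, one_mul]
    nlinarith [abs_nonneg (Real.sin (θ i)), Real.abs_sin_le_one (θ i)]
  -- t := ‖A δ‖
  set t := enorm2 (A.mulVec δ) with ht
  have htnn : 0 ≤ t := enorm_nonneg' _
  have ht1 : t ≤ σmax * (η * s) :=
    (hmax δ).trans (mul_le_mul_of_nonneg_left hδη (le_of_lt hσmaxpos))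
  have ht2 : t ≤ σmax * s := by
    have := (hmax δ).trans (mul_le_mul_of_nonneg_left hδ1 (le_of_lt hσmaxpos))
    linarith [this]
  -- key: σmax * (η * s) * (σmax * s + 2 * r) = K * s ^ 2 / 2
  have hkey : σmax * (η * s) * (σmax * s + 2 * r) = K * s ^ 2 / 2 := by
    rw [hη]
    field_simp
  have hPpos : 0 < σmax * s + 2 * r := by positivity
  have htP : t * (σmax * s + 2 * r) ≤ K * s ^ 2 / 2 := by
    calc t * (σmax * s + 2 * r) ≤ σmax * (η * s) * (σmax * s + 2 * r) :=
          mul_le_mul_of_nonneg_right ht1 (le_of_lt hPpos)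
      _ = K * s ^ 2 / 2 := hkey
  have hmain : 2 * r * t + t ^ 2 ≤ K * s ^ 2 / 2 := by
    nlinarith [mul_le_mul_of_nonneg_left ht2 htnn]
  -- triangle inequality
  have hsplit : A.mulVec c2 - b = (A.mulVec cθ - b) + A.mulVec δ := by
    have : c2 = cθ + δ := by funext i; simp [hδ]
    rw [this, Matrix.mulVec_add]
    abel
  have hX : enorm2 (A.mulVec c2 - b) ≤ r + t := by
    rw [hsplit]; exact enorm2_add_le _ _
  have hXnn : 0 ≤ enorm2 (A.mulVec c2 - b) := enorm_nonneg' _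
  have hX2 : enorm2 (A.mulVec c2 - b) ^ 2 ≤ r ^ 2 + 2 * r * t + t ^ 2 := by nlinarith
  -- lower bound on ‖A sin θ‖²
  have hAs : σmin ^ 2 * s ^ 2 ≤ enorm2 (A.mulVec sθ) ^ 2 := by
    have h1 := hmin sθ
    have h2 : 0 ≤ σmin * s := by positivity
    nlinarith
  have hKdef : K = σmin ^ 2 + β := hK
  norm_num
  linarith [hX2, hmain, hAs]
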